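/- Let $(G,X)$ be a faithful self-similar group action and $S = X^* \bowtie G$ the associated Zappa–Szép product monoid, whose core is $S_c = \{\varnothing\} \times G$. For $g \in G$ and a word $w \in X^*$ of length $\ell$, set $n = |X|^\ell$. Then: (a) $[(w, 1_G)] \in F_n^{(\varnothing,g),(\varnothing,1_G)}$ if and only if $g(w) = w$; and (b) $[(w, 1_G)] \in A_n^{(\varnothing,g),(\varnothing,1_G)}$ if and only if $g(w) = w$ and $g|_w = 1_G$. -/
import Mathlib


/-- A faithful self-similar action of a group `G` on the free monoid over `X`. -/
structure SelfSimilarAction (G : Type*) [Group G] (X : Type*) where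
  act : G → List X → List X
  res : G → List X → G
  act_one : ∀ w, act 1 w = w
  res_one : ∀ w, res 1 w = 1
  act_mul : ∀ g h w, act (g * h) w = act g (act h w)
  res_mul : ∀ g h w, res (g * h) w = res g (act h w) * res h w
  act_nil : ∀ g, act g [] = []
  res_nil : ∀ g, res g [] = g
  act_append : ∀ g v w, act g (v ++ w) = act g v ++ act (res g v) w
  res_append : ∀ g v w, res g (v ++ w) = res (res g v) w
  length_act : ∀ g w, (act g w).length = w.length
  faithful : ∀ g, (∀ w, act g w = w) → g = 1

/-- Multiplication in the Zappa–Szép product `X* ⋈ G`: `(v,g)(w,h) = (v g(w), g|_w h)`. -/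
def zsMul {G X : Type*} [Group G] (A : SelfSimilarAction G X)
    (p q : List X × G) : List X × G :=
  (p.1 ++ A.act p.2 q.1, A.res p.2 q.1 * q.2)

/-- For `S = X* ⋈ G` with core `{∅} × G`: `[(w,1)] ∈ F_n^{(∅,g),(∅,1)}` iff `g(w) = w`, and
`[(w,1)] ∈ A_n^{(∅,g),(∅,1)}` iff `g(w) = w` and `g|_w = 1`, where `n = |X|^{ℓ(w)}`. -/
theorem ssa_fixed_absorbing (G X : Type*) [Group G] [Fintype X]
    (A : SelfSimilarAction G X) (g : G) (w : List X)
    (n : ℕ) (hn : n = Fintype.card X ^ w.length) :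
    ((∃ c d : G, zsMul A (zsMul A ([], g) (w, 1)) ([], c)
        = zsMul A (zsMul A ([], (1 : G)) (w, 1)) ([], d)) ↔ A.act g w = w) ∧
    ((∃ c : G, zsMul A (zsMul A ([], g) (w, 1)) ([], c)
        = zsMul A (zsMul A ([], (1 : G)) (w, 1)) ([], c)) ↔
      A.act g w = w ∧ A.res g w = 1) := by
  simp only [zsMul, A.act_nil, A.res_nil, A.act_one, A.res_one, List.append_nil,
    List.nil_append, Prod.mk.injEq, mul_one, one_mul]
  constructor
  · constructor
    · rintro ⟨c, d, hw, -⟩; exact hw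
    · intro hw; exact ⟨1, A.res g w, hw, mul_one _⟩
  · constructor
    · rintro ⟨c, hw, hc⟩
      exact ⟨hw, by have := mul_right_cancel (b := c) (by simpa using hc); simpa using this⟩
    · rintro ⟨hw, hr⟩; exact ⟨1, hw, by simp [hr]⟩
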